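/- Global mintermisation preserves the language of an SFA: the SFA M and its globally mintermised version M_G accept the same language. -/
import Mathlib


/-- An effective Boolean algebra over domain `D` with predicates `P`. -/
structure EBA (D P : Type) where
  denote : P → Set D
  disj : P → P → P
  conj : P → P → P
  neg : P → P
  top : P
  bot : P
  denote_disj : ∀ φ ψ, denote (disj φ ψ) = denote φ ∪ denote ψ
  denote_conj : ∀ φ ψ, denote (conj φ ψ) = denote φ ∩ denote ψ
  denote_neg : ∀ φ, denote (neg φ) = (denote φ)ᶜ
  denote_top : denote top = Set.univ
  denote_bot : denote bot = ∅

/-- Conjunction of a list of predicates. -/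
def EBA.bigConj {D P : Type} (A : EBA D P) : List P → P
  | [] => A.top
  | φ :: l => A.conj φ (A.bigConj l)

/-- The minterm of `Φ` determined by the subset `Φ' ⊆ Φ`:
`⋀_{φ∈Φ'} φ ∧ ⋀_{φ∈Φ∖Φ'} ¬φ`. -/
noncomputable def EBA.mintermOf {D P : Type} [DecidableEq P] (A : EBA D P) (Φ Φ' : Finset P) : P :=
  A.conj (A.bigConj Φ'.toList) (A.bigConj ((Φ \ Φ').toList.map A.neg))

/-- The globally mintermised transition relation. -/
def globalMinterms {Q D P : Type} [DecidableEq P] (A : EBA D P)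
    (Δ : Set (Q × P × Q)) (PD : Finset P) : Set (Q × P × Q) :=
  {y | ∃ (φ : P) (Φ' : Finset P), (y.1, φ, y.2.2) ∈ Δ ∧ Φ' ⊆ PD ∧
    y.2.1 = A.mintermOf PD Φ' ∧ (A.denote y.2.1).Nonempty ∧
    (A.denote y.2.1 ∩ A.denote φ).Nonempty}

/-- Acceptance of a word from a state over the concrete transitions of `Δ`. -/
def acceptsFrom {Q D P : Type} (A : EBA D P) (Δ : Set (Q × P × Q)) (F : Set Q) :
    Q → List D → Prop
  | q, [] => q ∈ F
  | q, a :: w => ∃ q' ψ, (q, ψ, q') ∈ Δ ∧ a ∈ A.denote ψ ∧ acceptsFrom A Δ F q' w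

/-- A word is accepted if some accepting run starts in an initial state. -/
def accepts {Q D P : Type} (A : EBA D P) (Δ : Set (Q × P × Q)) (I F : Set Q)
    (w : List D) : Prop :=
  ∃ q ∈ I, acceptsFrom A Δ F q w

lemma EBA.mem_bigConj {D P : Type} (A : EBA D P) (a : D) :
    ∀ l : List P, a ∈ A.denote (A.bigConj l) ↔ ∀ φ ∈ l, a ∈ A.denote φ
  | [] => by simp [EBA.bigConj, A.denote_top]
  | φ :: l => by
    rw [EBA.bigConj, A.denote_conj, Set.mem_inter_iff, A.mem_bigConj a l]
    simp

lemma EBA.mem_mintermOf {D P : Type} (A : EBA D P) [DecidableEq P] (a : D) (Φ Φ' : Finset P) :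
    a ∈ A.denote (A.mintermOf Φ Φ') ↔
      (∀ φ ∈ Φ', a ∈ A.denote φ) ∧ ∀ φ ∈ Φ, φ ∉ Φ' → a ∉ A.denote φ := by
  simp only [EBA.mintermOf, A.denote_conj, Set.mem_inter_iff, EBA.mem_bigConj,
    List.mem_map, Finset.mem_toList, Finset.mem_sdiff]
  constructor
  · rintro ⟨h1, h2⟩
    refine ⟨h1, fun φ hφ hφ' ha => ?_⟩
    have := h2 (A.neg φ) ⟨φ, ⟨hφ, hφ'⟩, rfl⟩
    rw [A.denote_neg] at this
    exact this ha
  · rintro ⟨h1, h2⟩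
    refine ⟨h1, ?_⟩
    rintro ψ ⟨φ, ⟨hφ, hφ'⟩, rfl⟩
    simpa [A.denote_neg] using h2 φ hφ hφ'

/-- Global mintermisation preserves the language of an SFA. -/
theorem globalMinterms_preserves_language {Q D P : Type} [DecidableEq P]
    (A : EBA D P) (Δ : Set (Q × P × Q)) (I F : Set Q) (PD : Finset P)
    (hPD : ↑PD = {φ : P | ∃ p q, (p, φ, q) ∈ Δ})
    (hsat : ∀ p φ q, (p, φ, q) ∈ Δ → (A.denote φ).Nonempty) :
    ∀ w : List D, accepts A Δ I F w ↔ accepts A (globalMinterms A Δ PD) I F w := by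
  have key : ∀ (q : Q) (w : List D),
      acceptsFrom A Δ F q w ↔ acceptsFrom A (globalMinterms A Δ PD) F q w := by
    intro q w
    induction w generalizing q with
    | nil => simp [acceptsFrom]
    | cons a w ih =>
      constructor
      · rintro ⟨q', ψ, hΔ, ha, hrest⟩
        classical
        have hmem : a ∈ A.denote (A.mintermOf PD (PD.filter (fun φ => a ∈ A.denote φ))) :=
          (A.mem_mintermOf a _ _).2 ⟨fun φ hφ => (Finset.mem_filter.1 hφ).2,
            fun φ hφ h ha' => h (Finset.mem_filter.2 ⟨hφ, ha'⟩)⟩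
        exact ⟨q', A.mintermOf PD (PD.filter (fun φ => a ∈ A.denote φ)),
          ⟨ψ, PD.filter (fun φ => a ∈ A.denote φ), hΔ, Finset.filter_subset _ _, rfl,
            ⟨a, hmem⟩, ⟨a, hmem, ha⟩⟩, hmem, (ih q').1 hrest⟩
      · rintro ⟨q', ω, ⟨φ, Φ', hΔ, hsub, hω, -, ⟨b, hbω, hbφ⟩⟩, ha, hrest⟩
        refine ⟨q', φ, hΔ, ?_, (ih q').2 hrest⟩
        have hφPD : φ ∈ PD := by
          rw [← Finset.mem_coe, hPD]; exact ⟨_, _, hΔ⟩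
        subst hω
        have hb := (A.mem_mintermOf b PD Φ').1 hbω
        have ha' := (A.mem_mintermOf a PD Φ').1 ha
        by_cases hφ : φ ∈ Φ'
        · exact ha'.1 φ hφ
        · exact absurd hbφ (hb.2 φ hφPD hφ)
  intro w
  exact exists_congr fun q => and_congr_right fun _ => key q w
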